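/- Let H₀ and H₁ be complex Hilbert spaces, C : dom(C) ⊆ H₀ → H₁ densely defined, closed and with closed range, and let g be a bounded operator on H₁ satisfying Hypothesis (Γ) and having closed range. Let κ : ran(C) → H₁ denote the inclusion map and let p be the orthogonal projection of H₁ onto ran(g). If there exists d > 0 such that ‖u‖ ≤ d‖pu‖ for all u ∈ ran(C) that are orthogonal to ker(p) ∩ ran(C), then κ*gκ has closed range in ran(C). -/

import Mathlib

open Complex Filter
open scoped InnerProductSpace

/-- The orthogonal projection onto a submodule (junk value `0` if the submodule is not closed). -/
noncomputable def oproj {H : Type*} [NormedAddCommGroup H] [InnerProductSpace ℂ H]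
    [CompleteSpace H] (K : Submodule ℂ H) : H →L[ℂ] K := by
  classical
  exact if h : IsClosed (K : Set H) then
    haveI := h.completeSpace_coe
    K.orthogonalProjectionOnto
  else 0

/-- Hypothesis (Γ). -/
def HypGamma {H : Type*} [NormedAddCommGroup H] [InnerProductSpace ℂ H] (γ : H →L[ℂ] H) : Prop :=
  ∃ (U : Submodule ℂ H) (c : ℝ) (γU : U →L[ℂ] U) (γp : Uᗮ →L[ℂ] Uᗮ),
    IsClosed (U : Set H) ∧ 0 < c ∧
    (∀ x : U, c * ‖x‖ ^ 2 ≤ (⟪x, γU x⟫_ℂ).re) ∧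
    (∀ y z : Uᗮ, ⟪γp y, z⟫_ℂ = ⟪y, γp z⟫_ℂ) ∧
    (∀ y : Uᗮ, 0 ≤ (⟪y, γp y⟫_ℂ).re) ∧
    (∀ (x : U) (y : Uᗮ), γ ((x : H) + (y : H)) = (γU x : H) + (γp y : H))

section Aux
variable {E F : Type*} [NormedAddCommGroup E] [InnerProductSpace ℂ E]
  [NormedAddCommGroup F] [InnerProductSpace ℂ F]

/-- Closed range from a lower bound on the orthogonal complement of the kernel. -/
theorem aux_closed_range [CompleteSpace E] (T : E →L[ℂ] F) (D : ℝ)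
    (h : ∀ x ∈ (LinearMap.ker (T : E →ₗ[ℂ] F))ᗮ, ‖x‖ ≤ D * ‖T x‖) :
    IsClosed ((LinearMap.range (T : E →ₗ[ℂ] F) : Submodule ℂ F) : Set F) := by
  haveI : CompleteSpace ((LinearMap.ker (T : E →ₗ[ℂ] F))ᗮ : Submodule ℂ E) :=
    (Submodule.isClosed_orthogonal _).completeSpace_coe
  haveI : CompleteSpace (LinearMap.ker (T : E →ₗ[ℂ] F)) :=
    (ContinuousLinearMap.isClosed_ker T).completeSpace_coe
  set S := T.comp ((LinearMap.ker (T : E →ₗ[ℂ] F))ᗮ : Submodule ℂ E).subtypeL with hSdef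
  have hanti : AntilipschitzWith (Real.toNNReal D) S := by
    apply S.antilipschitz_of_bound
    intro y
    have h1 := h (y : E) y.2
    have h2 : (D : ℝ) ≤ (Real.toNNReal D : ℝ) := Real.le_coe_toNNReal D
    calc ‖y‖ = ‖(y : E)‖ := rfl
      _ ≤ D * ‖T y‖ := h1
      _ ≤ (Real.toNNReal D : ℝ) * ‖T y‖ := by
          exact mul_le_mul_of_nonneg_right h2 (norm_nonneg _)
      _ = (Real.toNNReal D : ℝ) * ‖S y‖ := rfl
  have hclosed : IsClosed (Set.range S) :=
    (hanti.isClosedEmbedding S.uniformContinuous).isClosed_range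
  have hset : ((LinearMap.range (T : E →ₗ[ℂ] F) : Submodule ℂ F) : Set F) = Set.range S := by
    ext v
    constructor
    · rintro ⟨x, rfl⟩
      obtain ⟨a, ha, b, hb, rfl⟩ := (LinearMap.ker (T : E →ₗ[ℂ] F)).exists_add_mem_mem_orthogonal x
      refine ⟨⟨b, hb⟩, ?_⟩
      show T b = T (a + b)
      rw [map_add, show T a = 0 from LinearMap.mem_ker.mp ha, zero_add]
    · rintro ⟨y, rfl⟩
      exact ⟨(y : E), rfl⟩
  rw [hset]
  exact hclosed

/-- Generalized Cauchy–Schwarz for a nonnegative self-adjoint operator. -/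
theorem aux_cs (γ : E →L[ℂ] E) (hsym : ∀ y z : E, ⟪γ y, z⟫_ℂ = ⟪y, γ z⟫_ℂ)
    (hpos : ∀ y : E, 0 ≤ (⟪y, γ y⟫_ℂ).re) (y : E) :
    ‖γ y‖ ^ 2 ≤ ‖γ‖ * (⟪y, γ y⟫_ℂ).re := by
  by_cases hb : γ y = 0
  · simp [hb]
  have hγne : γ ≠ 0 := by
    intro h; exact hb (by simp [h])
  have hγpos : 0 < ‖γ‖ :=
    lt_of_le_of_ne (norm_nonneg _) fun h => hγne ((ContinuousLinearMap.opNorm_zero_iff γ).mp h.symm)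
  have key : ∀ t : ℝ, 0 ≤ (⟪y, γ y⟫_ℂ).re + 2 * ‖γ y‖ ^ 2 * t
      + (⟪γ y, γ (γ y)⟫_ℂ).re * t ^ 2 := by
    intro t
    have h0 := hpos (y + (t : ℂ) • γ y)
    have hexp : ⟪y + (t : ℂ) • γ y, γ (y + (t : ℂ) • γ y)⟫_ℂ
        = ⟪y, γ y⟫_ℂ + ((t * ‖γ y‖ ^ 2 : ℝ) : ℂ) + ((t * ‖γ y‖ ^ 2 : ℝ) : ℂ)
          + ((t ^ 2 : ℝ) : ℂ) * ⟪γ y, γ (γ y)⟫_ℂ := by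
      rw [map_add, map_smul, inner_add_left, inner_add_right, inner_add_right,
        inner_smul_left, inner_smul_right, inner_smul_left, inner_smul_right]
      have hyz : ⟪y, γ (γ y)⟫_ℂ = ((‖γ y‖ ^ 2 : ℝ) : ℂ) := by
        rw [← hsym y (γ y), inner_self_eq_norm_sq_to_K]
        norm_num
      have hzy : ⟪γ y, γ y⟫_ℂ = ((‖γ y‖ ^ 2 : ℝ) : ℂ) := by
        rw [inner_self_eq_norm_sq_to_K]
        norm_num
      rw [hyz, hzy]
      simp only [Complex.conj_ofReal]
      push_cast
      ring
    rw [hexp] at h0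
    simp only [Complex.add_re, Complex.ofReal_re, Complex.re_ofReal_mul] at h0
    linarith
  have hcc_le : (⟪γ y, γ (γ y)⟫_ℂ).re ≤ ‖γ‖ * ‖γ y‖ ^ 2 := by
    calc (⟪γ y, γ (γ y)⟫_ℂ).re ≤ ‖⟪γ y, γ (γ y)⟫_ℂ‖ := Complex.re_le_norm _
      _ ≤ ‖γ y‖ * ‖γ (γ y)‖ := norm_inner_le_norm _ _
      _ ≤ ‖γ y‖ * (‖γ‖ * ‖γ y‖) :=
          mul_le_mul_of_nonneg_left (γ.le_opNorm (γ y)) (norm_nonneg _)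
      _ = ‖γ‖ * ‖γ y‖ ^ 2 := by ring
  have hkey := key (-(1 / ‖γ‖))
  have h4 : 0 ≤ ‖γ‖ ^ 2 * ((⟪y, γ y⟫_ℂ).re + 2 * ‖γ y‖ ^ 2 * (-(1 / ‖γ‖))
      + (⟪γ y, γ (γ y)⟫_ℂ).re * (-(1 / ‖γ‖)) ^ 2) := mul_nonneg (by positivity) hkey
  have h5 : ‖γ‖ ^ 2 * ((⟪y, γ y⟫_ℂ).re + 2 * ‖γ y‖ ^ 2 * (-(1 / ‖γ‖))
      + (⟪γ y, γ (γ y)⟫_ℂ).re * (-(1 / ‖γ‖)) ^ 2)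
      = ‖γ‖ ^ 2 * (⟪y, γ y⟫_ℂ).re - 2 * ‖γ y‖ ^ 2 * ‖γ‖ + (⟪γ y, γ (γ y)⟫_ℂ).re := by
    field_simp
    ring
  rw [h5] at h4
  have h6 : 0 ≤ ‖γ‖ * (‖γ‖ * (⟪y, γ y⟫_ℂ).re - ‖γ y‖ ^ 2) := by nlinarith [h4, hcc_le]
  have h7 : (0:ℝ) ≤ ‖γ‖ * (⟪y, γ y⟫_ℂ).re - ‖γ y‖ ^ 2 := by
    by_contra hcon
    push_neg at hcon
    nlinarith [h6, hγpos]
  linarith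

set_option maxHeartbeats 1000000 in
/-- An operator with closed range is bounded below on the orthogonal complement of its kernel. -/
theorem aux_bddbelow [CompleteSpace E] (g : E →L[ℂ] E)
    (hr : IsClosed ((LinearMap.range (g : E →ₗ[ℂ] E) : Submodule ℂ E) : Set E)) :
    ∃ m : ℝ, 0 < m ∧ ∀ b ∈ (LinearMap.ker (g : E →ₗ[ℂ] E))ᗮ, ‖b‖ ≤ m * ‖g b‖ := by
  haveI : CompleteSpace (LinearMap.range (g : E →ₗ[ℂ] E)) := hr.completeSpace_coe
  haveI : CompleteSpace (LinearMap.ker (g : E →ₗ[ℂ] E)) :=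
    (ContinuousLinearMap.isClosed_ker g).completeSpace_coe
  haveI : CompleteSpace ((LinearMap.ker (g : E →ₗ[ℂ] E))ᗮ : Submodule ℂ E) :=
    (Submodule.isClosed_orthogonal _).completeSpace_coe
  set φ : ((LinearMap.ker (g : E →ₗ[ℂ] E))ᗮ : Submodule ℂ E) →L[ℂ] (LinearMap.range (g : E →ₗ[ℂ] E)) :=
    (g.comp ((LinearMap.ker (g : E →ₗ[ℂ] E))ᗮ : Submodule ℂ E).subtypeL).codRestrict (LinearMap.range (g : E →ₗ[ℂ] E))
      (fun x => ⟨(x : E), rfl⟩) with hφ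
  have hφval : ∀ x : ((LinearMap.ker (g : E →ₗ[ℂ] E))ᗮ : Submodule ℂ E), (φ x : E) = g (x : E) := fun x => rfl
  have hinj : LinearMap.ker (φ : ((LinearMap.ker (g : E →ₗ[ℂ] E))ᗮ : Submodule ℂ E) →ₗ[ℂ] (LinearMap.range (g : E →ₗ[ℂ] E))) = ⊥ := by
    rw [LinearMap.ker_eq_bot']
    intro x hx
    have hgx : g (x : E) = 0 := by
      have := congrArg (Subtype.val) hx
      simpa [hφval] using this
    have hxk : (x : E) ∈ LinearMap.ker (g : E →ₗ[ℂ] E) := hgx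
    have hbot : (x : E) ∈ (⊥ : Submodule ℂ E) :=
      (Submodule.orthogonal_disjoint (LinearMap.ker (g : E →ₗ[ℂ] E))).le_bot ⟨hxk, x.2⟩
    exact Subtype.ext ((Submodule.mem_bot ℂ).mp hbot)
  have hsurj : LinearMap.range (φ : ((LinearMap.ker (g : E →ₗ[ℂ] E))ᗮ : Submodule ℂ E) →ₗ[ℂ] (LinearMap.range (g : E →ₗ[ℂ] E))) = ⊤ := by
    rw [LinearMap.range_eq_top]
    rintro ⟨v, x, rfl⟩
    obtain ⟨a, haK, b, hbK, hx⟩ := (LinearMap.ker (g : E →ₗ[ℂ] E)).exists_add_mem_mem_orthogonal x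
    subst hx
    refine ⟨⟨b, hbK⟩, Subtype.ext ?_⟩
    show g b = g (a + b)
    rw [map_add, show g a = 0 from LinearMap.mem_ker.mp haK, zero_add]
  set e := ContinuousLinearEquiv.ofBijective φ hinj hsurj with he
  refine ⟨‖(e.symm : (LinearMap.range (g : E →ₗ[ℂ] E)) →L[ℂ] ((LinearMap.ker (g : E →ₗ[ℂ] E))ᗮ : Submodule ℂ E))‖ + 1,
    by positivity, ?_⟩
  intro b hb
  set y : ((LinearMap.ker (g : E →ₗ[ℂ] E))ᗮ : Submodule ℂ E) := ⟨b, hb⟩ with hy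
  have h1 : ‖y‖ ≤ ‖(e.symm : (LinearMap.range (g : E →ₗ[ℂ] E)) →L[ℂ] ((LinearMap.ker (g : E →ₗ[ℂ] E))ᗮ : Submodule ℂ E))‖
      * ‖e y‖ := by
    calc ‖y‖ = ‖e.symm (e y)‖ := by rw [e.symm_apply_apply]
      _ ≤ _ := (e.symm : (LinearMap.range (g : E →ₗ[ℂ] E)) →L[ℂ]
          ((LinearMap.ker (g : E →ₗ[ℂ] E))ᗮ : Submodule ℂ E)).le_opNorm _
  have heφ : e y = φ y := by
    rw [he]
    exact congrFun (ContinuousLinearEquiv.coeFn_ofBijective φ hinj hsurj) y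
  have h2 : ‖e y‖ = ‖g b‖ := by
    rw [heφ]
    show ‖(φ y : E)‖ = ‖g b‖
    rw [hφval]
  have h3 : ‖y‖ = ‖b‖ := rfl
  rw [h3, h2] at h1
  nlinarith [h1, norm_nonneg (g b),
    norm_nonneg (e.symm : (LinearMap.range (g : E →ₗ[ℂ] E)) →L[ℂ] ((LinearMap.ker (g : E →ₗ[ℂ] E))ᗮ : Submodule ℂ E))]

end Aux

set_option maxHeartbeats 2000000 in
theorem stmt_15
    {H₀ H₁ : Type*} [NormedAddCommGroup H₀] [InnerProductSpace ℂ H₀] [CompleteSpace H₀]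
    [NormedAddCommGroup H₁] [InnerProductSpace ℂ H₁] [CompleteSpace H₁]
    (C : H₀ →ₗ.[ℂ] H₁)
    (hdense : Dense (C.domain : Set H₀))
    (hCclosed : IsClosed (C.graph : Set (H₀ × H₁)))
    (hranC : IsClosed ((LinearMap.range C.toFun : Submodule ℂ H₁) : Set H₁))
    (g : H₁ →L[ℂ] H₁) (hg : HypGamma g)
    (hrang : IsClosed ((LinearMap.range (g : H₁ →ₗ[ℂ] H₁) : Submodule ℂ H₁) : Set H₁))
    (d : ℝ) (hd : 0 < d)
    (hineq : ∀ u ∈ LinearMap.range C.toFun,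
      u ∈ ((LinearMap.ker (((LinearMap.range (g : H₁ →ₗ[ℂ] H₁)).subtypeL.comp (oproj (LinearMap.range (g : H₁ →ₗ[ℂ] H₁))) : H₁ →ₗ[ℂ] H₁)) :
          Submodule ℂ H₁) ⊓ LinearMap.range C.toFun)ᗮ →
      ‖u‖ ≤ d * ‖(LinearMap.range (g : H₁ →ₗ[ℂ] H₁)).subtypeL (oproj (LinearMap.range (g : H₁ →ₗ[ℂ] H₁)) u)‖) :
    IsClosed ((LinearMap.range
        (((oproj (LinearMap.range C.toFun)).comp (g.comp (LinearMap.range C.toFun).subtypeL) :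
          LinearMap.range C.toFun →ₗ[ℂ] LinearMap.range C.toFun)) :
        Submodule ℂ (LinearMap.range C.toFun)) :
      Set (LinearMap.range C.toFun)) := by
  classical
  obtain ⟨U, c, γU, γp, hUclosed, hc, hcoer, hsymγ, hposγ, hdecomp⟩ := hg
  haveI : CompleteSpace U := hUclosed.completeSpace_coe
  haveI hRcomplete : CompleteSpace (LinearMap.range C.toFun : Submodule ℂ H₁) :=
    hranC.completeSpace_coe
  haveI hGcomplete : CompleteSpace (LinearMap.range (g : H₁ →ₗ[ℂ] H₁) : Submodule ℂ H₁) :=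
    hrang.completeSpace_coe
  haveI : CompleteSpace (LinearMap.ker (g : H₁ →ₗ[ℂ] H₁) : Submodule ℂ H₁) :=
    (ContinuousLinearMap.isClosed_ker g).completeSpace_coe
  set R : Submodule ℂ H₁ := LinearMap.range C.toFun with hRdef
  set G : Submodule ℂ H₁ := LinearMap.range (g : H₁ →ₗ[ℂ] H₁) with hGdef
  have hoprojR : oproj R = Submodule.orthogonalProjectionOnto R := by
    unfold oproj
    rw [dif_pos hranC]
  have hoprojG : oproj G = Submodule.orthogonalProjectionOnto G := by
    unfold oproj
    rw [dif_pos hrang]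
  -- basic decomposition facts
  have hsplit : ∀ x : H₁,
      ((Submodule.orthogonalProjectionOnto U x : H₁)) + ((Submodule.orthogonalProjectionOnto Uᗮ x : H₁)) = x :=
    fun x => by
        rw [show ((Uᗮ.orthogonalProjectionOnto x : H₁)) = x - (U.orthogonalProjectionOnto x : H₁) from
          congrArg Subtype.val (Submodule.orthogonalProjectionOnto_orthogonal (K := U) x)]
        abel
  have hgx : ∀ x : H₁, g x = ((γU (Submodule.orthogonalProjectionOnto U x) : H₁))
      + ((γp (Submodule.orthogonalProjectionOnto Uᗮ x) : H₁)) := by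
    intro x
    conv_lhs => rw [← hsplit x]
    exact hdecomp _ _
  have hinner : ∀ x : H₁, ⟪x, g x⟫_ℂ =
      ⟪Submodule.orthogonalProjectionOnto U x, γU (Submodule.orthogonalProjectionOnto U x)⟫_ℂ
      + ⟪Submodule.orthogonalProjectionOnto Uᗮ x, γp (Submodule.orthogonalProjectionOnto Uᗮ x)⟫_ℂ := by
    intro x
    conv_lhs => rw [← hsplit x]
    rw [hdecomp, inner_add_left, inner_add_right, inner_add_right]
    have h1 : ⟪((Submodule.orthogonalProjectionOnto U x : H₁)),
        ((γp (Submodule.orthogonalProjectionOnto Uᗮ x) : H₁))⟫_ℂ = 0 :=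
      Submodule.inner_right_of_mem_orthogonal (Submodule.coe_mem _) (Submodule.coe_mem _)
    have h2 : ⟪((Submodule.orthogonalProjectionOnto Uᗮ x : H₁)),
        ((γU (Submodule.orthogonalProjectionOnto U x) : H₁))⟫_ℂ = 0 :=
      Submodule.inner_left_of_mem_orthogonal (Submodule.coe_mem _) (Submodule.coe_mem _)
    rw [h1, h2]
    rw [← Submodule.coe_inner, ← Submodule.coe_inner]
    ring
  have hKp : (0:ℝ) ≤ ‖γU‖ ^ 2 / c + ‖γp‖ :=
    add_nonneg (div_nonneg (sq_nonneg _) hc.le) γp.opNorm_nonneg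
  -- norm-squared bound
  have hnormsq : ∀ x : H₁, ‖g x‖ ^ 2 ≤ (‖γU‖ ^ 2 / c + ‖γp‖) * (⟪x, g x⟫_ℂ).re := by
    intro x
    have hcs := aux_cs γp hsymγ hposγ (Submodule.orthogonalProjectionOnto Uᗮ x)
    have hcoer' := hcoer (Submodule.orthogonalProjectionOnto U x)
    have hbsq : ‖g x‖ ^ 2 = ‖γU (Submodule.orthogonalProjectionOnto U x)‖ ^ 2
        + ‖γp (Submodule.orthogonalProjectionOnto Uᗮ x)‖ ^ 2 := by
      rw [hgx x, norm_add_sq (𝕜 := ℂ)]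
      have h1 : ⟪((γU (Submodule.orthogonalProjectionOnto U x) : H₁)),
          ((γp (Submodule.orthogonalProjectionOnto Uᗮ x) : H₁))⟫_ℂ = 0 :=
        Submodule.inner_right_of_mem_orthogonal (Submodule.coe_mem _) (Submodule.coe_mem _)
      rw [h1]
      simp only [map_zero, mul_zero, add_zero, Submodule.norm_coe]
    have hopU : ‖γU (Submodule.orthogonalProjectionOnto U x)‖ ≤ ‖γU‖ * ‖Submodule.orthogonalProjectionOnto U x‖ :=
      γU.le_opNorm _
    have hA0 : (0:ℝ) ≤ (⟪Submodule.orthogonalProjectionOnto U x, γU (Submodule.orthogonalProjectionOnto U x)⟫_ℂ).re :=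
      le_trans (mul_nonneg hc.le (by positivity)) hcoer'
    have hB0 := hposγ (Submodule.orthogonalProjectionOnto Uᗮ x)
    have e1 : ‖γU (Submodule.orthogonalProjectionOnto U x)‖ ^ 2
        ≤ (‖γU‖ ^ 2 / c) * (⟪Submodule.orthogonalProjectionOnto U x, γU (Submodule.orthogonalProjectionOnto U x)⟫_ℂ).re := by
      have h1 : ‖γU (Submodule.orthogonalProjectionOnto U x)‖ ^ 2
          ≤ ‖γU‖ ^ 2 * ‖Submodule.orthogonalProjectionOnto U x‖ ^ 2 := by
        nlinarith [hopU, norm_nonneg (γU (Submodule.orthogonalProjectionOnto U x)),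
          norm_nonneg (Submodule.orthogonalProjectionOnto U x), γU.opNorm_nonneg]
      have h2 : ‖γU‖ ^ 2 * ‖Submodule.orthogonalProjectionOnto U x‖ ^ 2
          = (‖γU‖ ^ 2 / c) * (c * ‖Submodule.orthogonalProjectionOnto U x‖ ^ 2) := by
        field_simp
      calc ‖γU (Submodule.orthogonalProjectionOnto U x)‖ ^ 2
          ≤ ‖γU‖ ^ 2 * ‖Submodule.orthogonalProjectionOnto U x‖ ^ 2 := h1
        _ = (‖γU‖ ^ 2 / c) * (c * ‖Submodule.orthogonalProjectionOnto U x‖ ^ 2) := h2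
        _ ≤ (‖γU‖ ^ 2 / c)
            * (⟪Submodule.orthogonalProjectionOnto U x, γU (Submodule.orthogonalProjectionOnto U x)⟫_ℂ).re :=
          mul_le_mul_of_nonneg_left hcoer' (div_nonneg (sq_nonneg _) hc.le)
    rw [hinner x, Complex.add_re, hbsq]
    nlinarith [e1, hcs, hA0, hB0, γp.opNorm_nonneg,
      mul_nonneg (div_nonneg (sq_nonneg (‖γU‖)) hc.le) hB0,
      mul_nonneg γp.opNorm_nonneg hA0]
  -- re ≤ 0 implies in kernel
  have hker0 : ∀ x : H₁, (⟪x, g x⟫_ℂ).re ≤ 0 → g x = 0 := by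
    intro x hx
    have h1 := hnormsq x
    have h2 : ‖g x‖ ^ 2 ≤ 0 := by nlinarith [h1, hx, hKp]
    have h3 : ‖g x‖ ^ 2 = 0 := le_antisymm h2 (sq_nonneg _)
    exact norm_eq_zero.mp (pow_eq_zero_iff two_ne_zero |>.mp h3)
  -- kernel of g is orthogonal to range of g
  have hkerG : ∀ x : H₁, g x = 0 → x ∈ Gᗮ := by
    intro x hx
    have h0 : ((γU (Submodule.orthogonalProjectionOnto U x) : H₁))
        + ((γp (Submodule.orthogonalProjectionOnto Uᗮ x) : H₁)) = 0 := by rw [← hgx x]; exact hx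
    have hA : ((γU (Submodule.orthogonalProjectionOnto U x) : H₁)) = 0 := by
      have hmem : ((γU (Submodule.orthogonalProjectionOnto U x) : H₁)) ∈ U ⊓ Uᗮ := by
        refine ⟨Submodule.coe_mem _, ?_⟩
        have : ((γU (Submodule.orthogonalProjectionOnto U x) : H₁))
            = -((γp (Submodule.orthogonalProjectionOnto Uᗮ x) : H₁)) := eq_neg_of_add_eq_zero_left h0
        rw [this]
        exact neg_mem (Submodule.coe_mem _)
      have := (Submodule.orthogonal_disjoint U).le_bot hmem
      exact (Submodule.mem_bot ℂ).mp this
    have hB : ((γp (Submodule.orthogonalProjectionOnto Uᗮ x) : H₁)) = 0 := by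
      rw [hA, zero_add] at h0; exact h0
    have hγpx : γp (Submodule.orthogonalProjectionOnto Uᗮ x) = 0 := Submodule.coe_eq_zero.mp hB
    have hγUx : γU (Submodule.orthogonalProjectionOnto U x) = 0 := Submodule.coe_eq_zero.mp hA
    have hu0 : Submodule.orthogonalProjectionOnto U x = 0 := by
      have h1 := hcoer (Submodule.orthogonalProjectionOnto U x)
      rw [hγUx, inner_zero_right] at h1
      simp only [Complex.zero_re] at h1
      have hsq : ‖Submodule.orthogonalProjectionOnto U x‖ ^ 2 = 0 := by
        nlinarith [h1, hc, sq_nonneg ‖Submodule.orthogonalProjectionOnto U x‖]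
      exact norm_eq_zero.mp (pow_eq_zero_iff two_ne_zero |>.mp hsq)
    rw [Submodule.mem_orthogonal]
    rintro v ⟨y, rfl⟩
    rw [show (g : H₁ →ₗ[ℂ] H₁) y = g y from rfl, hgx y, inner_add_left]
    have hx' : x = ((Submodule.orthogonalProjectionOnto Uᗮ x : H₁)) := by
      conv_lhs => rw [← hsplit x]
      rw [hu0]
      simp
    rw [hx']
    have t1 : ⟪((γU (Submodule.orthogonalProjectionOnto U y) : H₁)),
        ((Submodule.orthogonalProjectionOnto Uᗮ x : H₁))⟫_ℂ = 0 :=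
      Submodule.inner_right_of_mem_orthogonal (Submodule.coe_mem _) (Submodule.coe_mem _)
    have t2 : ⟪((γp (Submodule.orthogonalProjectionOnto Uᗮ y) : H₁)),
        ((Submodule.orthogonalProjectionOnto Uᗮ x : H₁))⟫_ℂ
        = ⟪γp (Submodule.orthogonalProjectionOnto Uᗮ y), Submodule.orthogonalProjectionOnto Uᗮ x⟫_ℂ :=
      (Submodule.coe_inner _ _ _).symm
    rw [t1, t2, hsymγ, hγpx, inner_zero_right, add_zero]
  -- the operator T
  set T := (oproj R).comp (g.comp R.subtypeL) with hT
  have hTapp : ∀ x : R, T x = Submodule.orthogonalProjectionOnto R (g (x : H₁)) := by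
    intro x
    rw [hT, hoprojR]
    rfl
  have hTker : ∀ x : R, T x = 0 ↔ g (x : H₁) = 0 := by
    intro x
    constructor
    · intro hx
      apply hker0
      have h := Submodule.inner_orthogonalProjectionOnto_eq_of_mem_left (K := R) x (g (x : H₁))
      rw [← hTapp x, hx, inner_zero_right] at h
      rw [← h]
      simp
    · intro hx
      rw [hTapp x, hx, map_zero]
  obtain ⟨m, hm, hmb⟩ := aux_bddbelow g hrang
  apply aux_closed_range T (d ^ 2 * m ^ 2 * (‖γU‖ ^ 2 / c + ‖γp‖))
  intro x hx
  by_cases hx0 : x = 0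
  · simp [hx0]
  -- hineq applies to x
  have horth : (x : H₁) ∈ ((LinearMap.ker ((G.subtypeL.comp (oproj G)) : H₁ →ₗ[ℂ] H₁)) ⊓ R)ᗮ := by
    rw [Submodule.mem_orthogonal]
    rintro v ⟨hv1, hv2⟩
    have hv3 : Submodule.orthogonalProjectionOnto G v = 0 := by
      have : G.subtypeL ((oproj G) v) = 0 := hv1
      rw [hoprojG] at this
      exact Submodule.coe_eq_zero.mp this
    have hvGp : v ∈ Gᗮ := Submodule.orthogonalProjectionOnto_eq_zero_iff.mp hv3
    have hgv : g v = 0 := by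
      apply hker0
      have h1 : ⟪g v, v⟫_ℂ = 0 := (Submodule.mem_orthogonal G v).mp hvGp (g v) ⟨v, rfl⟩
      have h2 : ⟪v, g v⟫_ℂ = 0 := by
        rw [← inner_conj_symm, h1, map_zero]
      rw [h2]
      simp
    have hvT : (⟨v, hv2⟩ : R) ∈ LinearMap.ker (T : R →ₗ[ℂ] R) := LinearMap.mem_ker.mpr ((hTker _).mpr hgv)
    have h0 : ⟪(⟨v, hv2⟩ : R), x⟫_ℂ = 0 :=
      (Submodule.mem_orthogonal (LinearMap.ker (T : R →ₗ[ℂ] R)) x).mp hx _ hvT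
    rw [Submodule.coe_inner] at h0
    exact h0
  have hx1 : ‖(x : H₁)‖ ≤ d * ‖G.subtypeL (oproj G (x : H₁))‖ := hineq _ x.2 horth
  -- decompose x along ker g
  obtain ⟨a, haK, b, hbK, hab⟩ := (LinearMap.ker (g : H₁ →ₗ[ℂ] H₁)).exists_add_mem_mem_orthogonal ((x : H₁))
  have hga : g a = 0 := haK
  have hPa : Submodule.orthogonalProjectionOnto G a = 0 :=
    Submodule.orthogonalProjectionOnto_eq_zero_iff.mpr (hkerG a hga)
  have hPnorm : ‖G.subtypeL (oproj G (x : H₁))‖ ≤ ‖b‖ := by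
    rw [hoprojG]
    have h1 : ‖G.subtypeL (Submodule.orthogonalProjectionOnto G (x : H₁))‖
        = ‖Submodule.orthogonalProjectionOnto G ((x : H₁))‖ := rfl
    rw [h1, hab, map_add, hPa, zero_add]
    calc ‖Submodule.orthogonalProjectionOnto G b‖
        ≤ ‖(Submodule.orthogonalProjectionOnto G : H₁ →L[ℂ] G)‖ * ‖b‖ := (Submodule.orthogonalProjectionOnto G).le_opNorm b
      _ ≤ 1 * ‖b‖ := mul_le_mul_of_nonneg_right (Submodule.orthogonalProjectionOnto_norm_le G) (norm_nonneg _)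
      _ = ‖b‖ := one_mul _
  have hbb : ‖b‖ ≤ m * ‖g b‖ := hmb b hbK
  have hgb : g b = g (x : H₁) := by
    rw [hab, map_add, hga, zero_add]
  rw [hgb] at hbb
  have hchain1 : ‖(x : H₁)‖ ≤ d * m * ‖g (x : H₁)‖ := by
    calc ‖(x : H₁)‖ ≤ d * ‖G.subtypeL (oproj G (x : H₁))‖ := hx1
      _ ≤ d * ‖b‖ := mul_le_mul_of_nonneg_left hPnorm hd.le
      _ ≤ d * (m * ‖g (x : H₁)‖) := mul_le_mul_of_nonneg_left hbb hd.le
      _ = d * m * ‖g (x : H₁)‖ := by ring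
  have hchain2 : ‖g (x : H₁)‖ ^ 2
      ≤ (‖γU‖ ^ 2 / c + ‖γp‖) * (‖x‖ * ‖T x‖) := by
    have h1 := hnormsq ((x : H₁))
    have h2 : ⟪(x : H₁), g (x : H₁)⟫_ℂ = ⟪x, T x⟫_ℂ := by
      rw [hTapp x]
      exact (Submodule.inner_orthogonalProjectionOnto_eq_of_mem_left (K := R) x (g (x : H₁))).symm
    rw [h2] at h1
    have h3 : (⟪x, T x⟫_ℂ).re ≤ ‖x‖ * ‖T x‖ := by
      calc (⟪x, T x⟫_ℂ).re ≤ ‖⟪x, T x⟫_ℂ‖ := Complex.re_le_norm _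
        _ ≤ ‖x‖ * ‖T x‖ := norm_inner_le_norm _ _
    exact h1.trans (mul_le_mul_of_nonneg_left h3 hKp)
  have hxnorm : ‖(x : H₁)‖ = ‖x‖ := rfl
  rw [hxnorm] at hchain1
  have hxpos : 0 < ‖x‖ := norm_pos_iff.mpr hx0
  have hsq : ‖x‖ ^ 2 ≤ d ^ 2 * m ^ 2 * ‖g (x : H₁)‖ ^ 2 := by
    have h0 : ‖x‖ ^ 2 ≤ (d * m * ‖g (x : H₁)‖) ^ 2 := pow_le_pow_left₀ (norm_nonneg x) hchain1 2
    calc ‖x‖ ^ 2 ≤ (d * m * ‖g (x : H₁)‖) ^ 2 := h0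
      _ = d ^ 2 * m ^ 2 * ‖g (x : H₁)‖ ^ 2 := by ring
  have h7 : ‖x‖ ^ 2 ≤ d ^ 2 * m ^ 2 * (‖γU‖ ^ 2 / c + ‖γp‖) * (‖x‖ * ‖T x‖) := by
    calc ‖x‖ ^ 2 ≤ d ^ 2 * m ^ 2 * ‖g (x : H₁)‖ ^ 2 := hsq
      _ ≤ d ^ 2 * m ^ 2 * ((‖γU‖ ^ 2 / c + ‖γp‖) * (‖x‖ * ‖T x‖)) :=
          mul_le_mul_of_nonneg_left hchain2 (by positivity)
      _ = d ^ 2 * m ^ 2 * (‖γU‖ ^ 2 / c + ‖γp‖) * (‖x‖ * ‖T x‖) := by ring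
  have h8 : ‖x‖ * ‖x‖ ≤ (d ^ 2 * m ^ 2 * (‖γU‖ ^ 2 / c + ‖γp‖) * ‖T x‖) * ‖x‖ := by
    calc ‖x‖ * ‖x‖ = ‖x‖ ^ 2 := (sq ‖x‖).symm
      _ ≤ d ^ 2 * m ^ 2 * (‖γU‖ ^ 2 / c + ‖γp‖) * (‖x‖ * ‖T x‖) := h7
      _ = (d ^ 2 * m ^ 2 * (‖γU‖ ^ 2 / c + ‖γp‖) * ‖T x‖) * ‖x‖ := by ring
  exact le_of_mul_le_mul_right h8 hxpos
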